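/- Let D be an endomorphism of a vector space V over a field and let k ≥ 0. Then: (1) D^{2k} maps ker(D^{2k+1}) onto range(D^{2k}) ∩ ker(D), i.e. the image of ker(D^{2k+1}) under D^{2k} equals range(D^{2k}) ∩ ker(D); and (2) for x ∈ ker(D^{2k+1}), one has D^{2k}x ∈ range(D^{2k+1}) ∩ ker(D) if and only if x ∈ (range(D) ∩ ker(D^{2k+1})) + ker(D^{2k}). Consequently D^{2k} induces a linear isomorphism from H^k_top(V,D) := ker(D^{2k+1}) / ((range(D) ∩ ker(D^{2k+1})) + ker(D^{2k})) onto H^k(V,D). (Proposition 5.1: the 'top' and 'bottom' versions of higher Dirac cohomology are naturally isomorphic.) -/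
import Mathlib


open LinearMap Module

/-- The `k`-th higher Dirac cohomology
`H^k(V,D) = (range D^{2k} ⊓ ker D) / (range D^{2k+1} ⊓ ker D)`. -/
abbrev higherDiracCohomology {𝕜 V : Type*} [Field 𝕜] [AddCommGroup V] [Module 𝕜 V]
    (D : Module.End 𝕜 V) (k : ℕ) :=
  ↥(range (D ^ (2 * k)) ⊓ ker D) ⧸
    Submodule.comap (range (D ^ (2 * k)) ⊓ ker D).subtype (range (D ^ (2 * k + 1)) ⊓ ker D)

/-- The "top" version of the `k`-th higher Dirac cohomology,
`H^k_top(V,D) = ker D^{2k+1} / ((range D ⊓ ker D^{2k+1}) + ker D^{2k})`. -/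
abbrev higherDiracCohomologyTop {𝕜 V : Type*} [Field 𝕜] [AddCommGroup V] [Module 𝕜 V]
    (D : Module.End 𝕜 V) (k : ℕ) :=
  ↥(ker (D ^ (2 * k + 1))) ⧸
    Submodule.comap (ker (D ^ (2 * k + 1))).subtype
      ((range D ⊓ ker (D ^ (2 * k + 1))) ⊔ ker (D ^ (2 * k)))

section Aux

variable {𝕜 V : Type*} [Field 𝕜] [AddCommGroup V] [Module 𝕜 V] (D : Module.End 𝕜 V) (k : ℕ)

lemma stmt9_comm (v : V) : D ((D ^ (2 * k)) v) = (D ^ (2 * k)) (D v) := by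
  rw [← Module.End.mul_apply, ← Module.End.mul_apply, ← pow_succ', ← pow_succ]

lemma stmt9_part1 :
    Submodule.map (D ^ (2 * k)) (ker (D ^ (2 * k + 1))) = range (D ^ (2 * k)) ⊓ ker D := by
  ext y
  simp only [Submodule.mem_map, Submodule.mem_inf, mem_ker, mem_range, pow_succ,
    Module.End.mul_apply]
  constructor
  · rintro ⟨x, hx, rfl⟩
    exact ⟨⟨x, rfl⟩, by rw [stmt9_comm]; exact hx⟩
  · rintro ⟨⟨x, rfl⟩, hx⟩
    exact ⟨x, by rw [← stmt9_comm]; exact hx, rfl⟩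

lemma stmt9_part2 (x : V) (hx : x ∈ ker (D ^ (2 * k + 1))) :
    (D ^ (2 * k)) x ∈ range (D ^ (2 * k + 1)) ⊓ ker D ↔
      x ∈ (range D ⊓ ker (D ^ (2 * k + 1))) ⊔ ker (D ^ (2 * k)) := by
  simp only [mem_ker, pow_succ, Module.End.mul_apply] at hx
  constructor
  · rintro ⟨⟨z, hz⟩, -⟩
    simp only [pow_succ, Module.End.mul_apply] at hz
    have h1 : D z ∈ range D ⊓ ker (D ^ (2 * k + 1)) := by
      refine ⟨⟨z, rfl⟩, ?_⟩
      simp only [SetLike.mem_coe, mem_ker, pow_succ, Module.End.mul_apply]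
      rw [← stmt9_comm, hz]
      rw [← stmt9_comm] at hx
      exact hx
    have h2 : x - D z ∈ ker (D ^ (2 * k)) := by
      simp only [mem_ker, map_sub, hz, sub_self]
    have hxx : x = D z + (x - D z) := by abel
    rw [hxx]
    exact Submodule.add_mem_sup h1 h2
  · rintro h
    rw [Submodule.mem_sup] at h
    obtain ⟨a, ⟨⟨w, rfl⟩, ha2⟩, b, hb, rfl⟩ := h
    simp only [mem_ker] at hb ha2
    refine ⟨⟨w, ?_⟩, ?_⟩
    · simp only [map_add, hb, add_zero, pow_succ, Module.End.mul_apply, stmt9_comm]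
    · simp only [SetLike.mem_coe, mem_ker, pow_succ, Module.End.mul_apply] at ha2
      simp only [SetLike.mem_coe, mem_ker, map_add, hb, add_zero, stmt9_comm]
      exact ha2

end Aux

/-- Proposition 5.1. (1) `D^{2k}` maps `ker D^{2k+1}` onto
`range D^{2k} ∩ ker D`; (2) for `x ∈ ker D^{2k+1}`, `D^{2k} x ∈ range D^{2k+1} ∩ ker D`
iff `x ∈ (range D ∩ ker D^{2k+1}) + ker D^{2k}`; consequently (3) `D^{2k}` induces a
linear isomorphism `H^k_top(V,D) ≅ H^k(V,D)`. -/
theorem stmt9 {𝕜 V : Type*} [Field 𝕜] [AddCommGroup V] [Module 𝕜 V]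
    (D : Module.End 𝕜 V) (k : ℕ) :
    Submodule.map (D ^ (2 * k)) (ker (D ^ (2 * k + 1))) = range (D ^ (2 * k)) ⊓ ker D ∧
    (∀ x ∈ ker (D ^ (2 * k + 1)),
      ((D ^ (2 * k)) x ∈ range (D ^ (2 * k + 1)) ⊓ ker D ↔
        x ∈ (range D ⊓ ker (D ^ (2 * k + 1))) ⊔ ker (D ^ (2 * k)))) ∧
    ∃ e : higherDiracCohomologyTop D k ≃ₗ[𝕜] higherDiracCohomology D k,
      ∀ (x : V) (hx : x ∈ ker (D ^ (2 * k + 1)))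
        (hy : (D ^ (2 * k)) x ∈ range (D ^ (2 * k)) ⊓ ker D),
        e (Submodule.Quotient.mk ⟨x, hx⟩) = Submodule.Quotient.mk ⟨(D ^ (2 * k)) x, hy⟩ := by
  refine ⟨stmt9_part1 D k, fun x hx => stmt9_part2 D k x hx, ?_⟩
  set S := range (D ^ (2 * k)) ⊓ ker D with hS
  set T := Submodule.comap S.subtype (range (D ^ (2 * k + 1)) ⊓ ker D) with hT
  set K := ker (D ^ (2 * k + 1)) with hK
  set P := Submodule.comap K.subtype ((range D ⊓ K) ⊔ ker (D ^ (2 * k))) with hP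
  have hmem : ∀ x : K, (D ^ (2 * k)) (x : V) ∈ S := by
    intro x
    rw [hS, ← stmt9_part1 D k]
    exact Submodule.mem_map_of_mem x.2
  let g : K →ₗ[𝕜] S := LinearMap.codRestrict S ((D ^ (2 * k)).comp K.subtype) hmem
  let f : K →ₗ[𝕜] S ⧸ T := T.mkQ.comp g
  have hkerf : ker f = P := by
    ext x
    simp only [f, g, LinearMap.mem_ker, LinearMap.comp_apply, Submodule.mkQ_apply,
      Submodule.Quotient.mk_eq_zero, hT, Submodule.mem_comap, LinearMap.codRestrict_apply,
      Submodule.subtype_apply, hP]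
    exact stmt9_part2 D k x x.2
  let e0 : (K ⧸ P) →ₗ[𝕜] S ⧸ T := P.liftQ f hkerf.ge
  have hinj : Function.Injective e0 := by
    rw [← LinearMap.ker_eq_bot]
    exact Submodule.ker_liftQ_eq_bot _ _ _ hkerf.le
  have hsurj : Function.Surjective e0 := by
    intro y
    obtain ⟨s, rfl⟩ := T.mkQ_surjective y
    obtain ⟨x, hxK, hxs⟩ : (s : V) ∈ Submodule.map (D ^ (2 * k)) K := by
      rw [stmt9_part1 D k]; exact s.2
    refine ⟨P.mkQ ⟨x, hxK⟩, ?_⟩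
    show f ⟨x, hxK⟩ = T.mkQ s
    simp only [f, g, LinearMap.comp_apply, Submodule.mkQ_apply]
    congr 1
    exact Subtype.ext hxs
  refine ⟨LinearEquiv.ofBijective e0 ⟨hinj, hsurj⟩, fun x hx hy => ?_⟩
  show e0 (P.mkQ ⟨x, hx⟩) = _
  show f ⟨x, hx⟩ = _
  simp only [f, g, LinearMap.comp_apply, Submodule.mkQ_apply]
  rfl
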